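/- For every prime p ≠ 3 and every integer a, there exists a point (x,y,z) in (Z/pZ)^3 with x^3 + y^3 + z^3 = a and (x,y,z) a smooth point of the affine cubic surface, i.e. not all of 3x^2, 3y^2, 3z^2 vanish at it in Z/pZ. -/
import Mathlib

open Finset Pointwise Polynomial

lemma sum_three_cubes (p : ℕ) (hp : p.Prime) (hp3 : p ≠ 3) (b : ZMod p) :
    ∃ x y z : ZMod p, x ^ 3 + y ^ 3 + z ^ 3 = b := by
  haveI : Fact p.Prime := ⟨hp⟩
  classical
  by_cases h3 : p % 3 = 1
  · -- Cauchy–Davenport argument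
    set C : Finset (ZMod p) := univ.image (fun x : ZMod p => x ^ 3) with hCdef
    have hCne : C.Nonempty := ⟨0, mem_image.2 ⟨0, mem_univ _, by ring⟩⟩
    have hcard : p ≤ 3 * #C := by
      have hd : (0 : WithBot ℕ) < (Polynomial.X ^ 3 : Polynomial (ZMod p)).degree := by
        rw [Polynomial.degree_X_pow]; norm_num
      have := FiniteField.card_image_polynomial_eval (R := ZMod p)
        (p := (Polynomial.X ^ 3 : Polynomial (ZMod p))) hd
      simpa [ZMod.card, hCdef] using this
    have hmul : 3 ∣ 3 * #C := ⟨#C, rfl⟩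
    have hC1 : 1 ≤ #C := hCne.card_pos
    have hCCne : (C + C).Nonempty := hCne.add hCne
    have h1 := ZMod.cauchy_davenport hp hCne hCne
    have h2 := ZMod.cauchy_davenport hp hCCne hCne
    have hle1 : #(C + C) ≤ p := by
      simpa [ZMod.card] using Finset.card_le_univ (C + C)
    have hle2 : #(C + C + C) ≤ p := by
      simpa [ZMod.card] using Finset.card_le_univ (C + C + C)
    rw [min_le_iff] at h1 h2
    have hfull : #(C + C + C) = p := by omega
    have huniv : C + C + C = univ := by
      apply Finset.eq_univ_of_card
      rw [hfull, ZMod.card]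
    have hb : b ∈ C + C + C := huniv ▸ mem_univ b
    rw [Finset.mem_add] at hb
    obtain ⟨s, hs, z', hz', hsz⟩ := hb
    rw [Finset.mem_add] at hs
    obtain ⟨x', hx', y', hy', hxy⟩ := hs
    rw [hCdef, Finset.mem_image] at hx' hy' hz'
    obtain ⟨x, -, hx⟩ := hx'
    obtain ⟨y, -, hy⟩ := hy'
    obtain ⟨z, -, hz⟩ := hz'
    exact ⟨x, y, z, by rw [hx, hy, hz, hxy, hsz]⟩
  · -- cubing is surjective
    have h0 : p % 3 ≠ 0 := by
      intro h
      exact hp3 ((Nat.prime_dvd_prime_iff_eq Nat.prime_three hp).mp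
        (Nat.dvd_of_mod_eq_zero h)).symm
    by_cases hb : b = 0
    · exact ⟨0, 0, 0, by simp [hb]⟩
    · have hcop : (Nat.card (ZMod p)ˣ).Coprime 3 := by
        rw [Nat.card_eq_fintype_card, ZMod.card_units]
        rw [Nat.coprime_comm]
        rw [Nat.Prime.coprime_iff_not_dvd Nat.prime_three]
        rintro ⟨k, hk⟩
        have := hp.two_le
        omega
      obtain ⟨u, hu⟩ := (IsUnit.mk0 b hb)
      obtain ⟨v, hv'⟩ := hcop.pow_left_bijective.surjective u
      have hv : v ^ 3 = u := hv'
      refine ⟨(v : ZMod p), 0, 0, ?_⟩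
      have : ((v ^ 3 : (ZMod p)ˣ) : ZMod p) = b := by rw [hv, hu]
      push_cast at this
      simp [this]

theorem stmt_7 (p : ℕ) (hp : p.Prime) (hp3 : p ≠ 3) (a : ℤ) :
    ∃ x y z : ZMod p, x ^ 3 + y ^ 3 + z ^ 3 = (a : ZMod p) ∧
      ¬(3 * x ^ 2 = 0 ∧ 3 * y ^ 2 = 0 ∧ 3 * z ^ 2 = 0) := by
  haveI : Fact p.Prime := ⟨hp⟩
  have h3 : (3 : ZMod p) ≠ 0 := by
    intro h
    have : (p : ℕ) ∣ 3 := by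
      have := (ZMod.natCast_eq_zero_iff 3 p).mp (by exact_mod_cast h)
      exact this
    exact hp3 ((Nat.prime_dvd_prime_iff_eq hp Nat.prime_three).mp this)
  by_cases ha : (a : ZMod p) = 0
  · refine ⟨1, -1, 0, by rw [ha]; ring, ?_⟩
    rintro ⟨hx, -, -⟩
    rw [one_pow, mul_one] at hx
    exact h3 hx
  · obtain ⟨x, y, z, h⟩ := sum_three_cubes p hp hp3 (a : ZMod p)
    refine ⟨x, y, z, h, ?_⟩
    rintro ⟨hx, hy, hz⟩
    have fx : x = 0 := by
      have := mul_eq_zero.mp hx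
      rcases this with h' | h'
      · exact absurd h' h3
      · exact pow_eq_zero_iff (by norm_num) |>.mp h'
    have fy : y = 0 := by
      rcases mul_eq_zero.mp hy with h' | h'
      · exact absurd h' h3
      · exact pow_eq_zero_iff (by norm_num) |>.mp h'
    have fz : z = 0 := by
      rcases mul_eq_zero.mp hz with h' | h'
      · exact absurd h' h3
      · exact pow_eq_zero_iff (by norm_num) |>.mp h'
    rw [fx, fy, fz] at h
    simp at h
    exact ha h.symm
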